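/- Let X be a compact, Hausdorff, totally disconnected topological group, k a field, and T the ring of locally constant functions from X to k. For any element g ∈ X with g ≠ 1, the ring automorphism of T given by t ↦ (x ↦ t(g⁻¹x)) does not restrict to the identity on any nonzero ideal of T; that is, for every nonzero ideal I of T there exists t ∈ I with t(g⁻¹x) ≠ t(x) for some x ∈ X. -/

import Mathlib

/-- Let `X` be a compact Hausdorff totally disconnected topological group, `k` a field,
and `T` the ring of locally constant functions `X → k`. For `g ∈ X` with `g ≠ 1`, the
ring automorphism `t ↦ (x ↦ t (g⁻¹ x))` of `T` is not the identity on any nonzero ideal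
of `T`: for every nonzero ideal `I` of `T` there is `t ∈ I` with `t (g⁻¹ x) ≠ t x` for
some `x ∈ X`. -/
theorem locallyConstant_translation_not_id_on_ideal
    {X : Type*} [TopologicalSpace X] [Group X] [IsTopologicalGroup X]
    [CompactSpace X] [T2Space X] [TotallyDisconnectedSpace X]
    {k : Type*} [Field k]
    (g : X) (hg : g ≠ 1)
    (I : Ideal (LocallyConstant X k)) (hI : I ≠ ⊥) :
    ∃ t ∈ I, ∃ x : X, t (g⁻¹ * x) ≠ t x := by
  have : TotallySeparatedSpace X := loc_compact_t2_tot_disc_iff_tot_sep.mp inferInstance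
  obtain ⟨f, hfI, hf⟩ := Submodule.exists_mem_ne_zero_of_ne_bot hI
  obtain ⟨x₀, hx₀⟩ : ∃ x₀, f x₀ ≠ 0 := by
    by_contra h
    push_neg at h
    exact hf (LocallyConstant.ext h)
  have hne : g⁻¹ * x₀ ≠ x₀ := fun h => hg (by
    have := mul_right_cancel (b := x₀) (by simpa using h)
    simpa using congrArg (·⁻¹) this)
  obtain ⟨U, hU, hxU, hyU⟩ := exists_isClopen_of_totally_separated (Ne.symm hne)
  classical
  let χ : LocallyConstant X k :=
    ⟨fun x => if x ∈ U then 1 else 0, by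
      apply IsLocallyConstant.iff_isOpen_fiber.mpr
      intro y
      by_cases hy : y = 1
      · subst hy
        convert hU.2 using 1
        ext x; simp [one_ne_zero]
      · by_cases hy0 : y = 0
        · subst hy0
          convert hU.compl.2 using 1
          ext x; by_cases h : x ∈ U <;> simp [h, one_ne_zero]
        · convert isOpen_empty using 1
          ext x; by_cases h : x ∈ U <;> simp [h, Ne.symm hy, Ne.symm hy0]⟩
  refine ⟨χ * f, I.mul_mem_left χ hfI, x₀, ?_⟩
  have h1 : (χ * f) x₀ = f x₀ := by
    simp [χ, LocallyConstant.mul_apply, hxU]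
  have h2 : (χ * f) (g⁻¹ * x₀) = 0 := by
    simp [χ, LocallyConstant.mul_apply]
    intro h
    exact absurd h hyU
  rw [h1, h2]
  exact Ne.symm hx₀
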